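/- Let s ≥ 0, δ ≥ 0, V > 4δ, let L = [a₀,a₁]×[b₀,b₁] be an axes-aligned rectangle, and let v be a valuation given by an integrable density. Let a₀ = x₀ < x₁ < … < x_d = a₁ and b₀ = y₀ < y₁ < … < y_d = b₁ be grid coordinates such that v([x_i, x_{i+1}]×[b₀,b₁]) ≤ δ for every i and v([a₀,a₁]×[y_j, y_{j+1}]) ≤ δ for every j. Suppose there exists an s-separated guillotine partition of L into k rectangles, each of v-value at least V. Then there exists an s-separated guillotine partition of L into k rectangles, each of whose four corners lies in the grid G = {(x_i, y_j) : 0 ≤ i, j ≤ d}, and each of v-value at least V − 4δ. -/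

import Mathlib

open MeasureTheory

noncomputable section

/-- A point of the plane. -/
abbrev Pt := ℝ × ℝ

/-- The ℓ∞ distance between two points of the plane. -/
def linfDist (p q : Pt) : ℝ := max |p.1 - q.1| |p.2 - q.2|

/-- Two pieces of land are `s`-separated: every pair of points, one from each piece,
is at ℓ∞ distance at least `s`. -/
def SepSets (s : ℝ) (A B : Set Pt) : Prop := ∀ p ∈ A, ∀ q ∈ B, s ≤ linfDist p q

/-- An axes-aligned rectangle `[a,b] × [c,d]` with `a < b` and `c < d`. -/
structure Rect where
  a : ℝ
  b : ℝ
  c : ℝ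
  d : ℝ
  hab : a < b
  hcd : c < d

/-- The set of points of a rectangle. -/
def Rect.set (R : Rect) : Set Pt := Set.Icc R.a R.b ×ˢ Set.Icc R.c R.d

/-- The length of the shorter side of a rectangle. -/
def Rect.short (R : Rect) : ℝ := min (R.b - R.a) (R.d - R.c)

/-- The length of the longer side of a rectangle. -/
def Rect.long (R : Rect) : ℝ := max (R.b - R.a) (R.d - R.c)

/-- A rectangle is `r`-fat if its longer side is at most `r` times its shorter side. -/
def Rect.Fat (r : ℝ) (R : Rect) : Prop := R.long ≤ r * R.short

/-- The value of a piece `Z` under the density `f`. -/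
def val (f : Pt → ℝ) (Z : Set Pt) : ℝ := ∫ p in Z, f p

/-- The 1-out-of-`k` maximin share of an agent with density `f` on land `L`
with separation parameter `s`: the supremum over families of `k` axes-aligned
rectangles inside `L`, pairwise intersecting in zero measure and pairwise
`s`-separated, of the minimum value of a rectangle. -/
def MMS (f : Pt → ℝ) (L : Set Pt) (s : ℝ) (k : ℕ) : ℝ :=
  sSup {t : ℝ | ∃ P : Fin k → Rect,
    (∀ j, (P j).set ⊆ L) ∧
    (∀ i j, i ≠ j → volume ((P i).set ∩ (P j).set) = 0) ∧
    (∀ i j, i ≠ j → SepSets s ((P i).set) ((P j).set)) ∧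
    (∀ j, t ≤ val f ((P j).set))}

/-- A valuation given by density `f` is `s`-normalized: there are finitely many
pairwise `s`-separated axes-aligned rectangles, each of value at most 1,
such that `f` vanishes outside their union. -/
def SNormalized (s : ℝ) (f : Pt → ℝ) : Prop :=
  ∃ (N : ℕ) (Q : Fin N → Rect),
    (∀ i j, i ≠ j → SepSets s ((Q i).set) ((Q j).set)) ∧
    (∀ i, val f ((Q i).set) ≤ 1) ∧
    (∀ p, p ∉ ⋃ i, (Q i).set → f p = 0)

/-- The unit square `[0,1] × [0,1]`. -/
def unitSquare : Set Pt := Set.Icc (0 : ℝ) 1 ×ˢ Set.Icc (0 : ℝ) 1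

/-- `Guillotine s a0 a1 b0 b1 P`: the family `P` of rectangles forms an
`s`-separated guillotine partition of `[a0,a1] × [b0,b1]`. -/
inductive Guillotine (s : ℝ) : ℝ → ℝ → ℝ → ℝ → List Rect → Prop
  | single (a0 a1 b0 b1 : ℝ) (P : Rect)
      (h : P.set ⊆ Set.Icc a0 a1 ×ˢ Set.Icc b0 b1) :
      Guillotine s a0 a1 b0 b1 [P]
  | vert (a0 a1 b0 b1 a : ℝ) (h1 : a0 < a) (h2 : a < a1 - s)
      (P1 P2 : List Rect)
      (g1 : Guillotine s a0 a b0 b1 P1)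
      (g2 : Guillotine s (a + s) a1 b0 b1 P2) :
      Guillotine s a0 a1 b0 b1 (P1 ++ P2)
  | horiz (a0 a1 b0 b1 b : ℝ) (h1 : b0 < b) (h2 : b < b1 - s)
      (P1 P2 : List Rect)
      (g1 : Guillotine s a0 a1 b0 b P1)
      (g2 : Guillotine s a0 a1 (b + s) b1 P2) :
      Guillotine s a0 a1 b0 b1 (P1 ++ P2)



lemma val_mono' (f : Pt → ℝ) (hint : Integrable f) (hpos : ∀ p, 0 ≤ f p)
    {A B : Set Pt} (hAB : A ⊆ B) : val f A ≤ val f B := by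
  refine setIntegral_mono_set hint.integrableOn ?_ (HasSubset.Subset.eventuallyLE hAB)
  exact Filter.Eventually.of_forall hpos

lemma val_union_le' (f : Pt → ℝ) (hint : Integrable f) (hpos : ∀ p, 0 ≤ f p)
    {A B : Set Pt} (hA : MeasurableSet A) (hB : MeasurableSet B) :
    val f (A ∪ B) ≤ val f A + val f B := by
  unfold val
  rw [← integral_indicator (hA.union hB), ← integral_indicator hA, ← integral_indicator hB,
      ← integral_add (hint.indicator hA) (hint.indicator hB)]
  refine integral_mono (hint.indicator (hA.union hB))
    ((hint.indicator hA).add (hint.indicator hB)) ?_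
  intro p
  by_cases hpA : p ∈ A <;> by_cases hpB : p ∈ B <;>
    simp_all [Set.indicator, hpos p, add_nonneg (hpos p) (hpos p)]


lemma oneDim (d : ℕ) (x : Fin (d+1) → ℝ) (hx : StrictMono x)
    (a b : ℝ) (ha : x 0 ≤ a) (hab : a < b) (hb : b ≤ x (Fin.last d)) :
    (∃ i j : Fin (d+1), a ≤ x i ∧ x i < x j ∧ x j ≤ b ∧
      (∃ c : Fin d, Set.Icc a (x i) ⊆ Set.Icc (x c.castSucc) (x c.succ)) ∧
      (∃ c : Fin d, Set.Icc (x j) b ⊆ Set.Icc (x c.castSucc) (x c.succ))) ∨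
    (∃ c1 c2 : Fin d, Set.Icc a b ⊆
      Set.Icc (x c1.castSucc) (x c1.succ) ∪ Set.Icc (x c2.castSucc) (x c2.succ)) := by
  classical
  have hd : 0 < d := by
    rcases Nat.eq_zero_or_pos d with h | h
    · subst h
      have : Fin.last 0 = 0 := rfl
      rw [this] at hb; linarith
    · exact h
  set S : Finset (Fin (d+1)) := Finset.univ.filter (fun i => a ≤ x i) with hS
  have hSne : S.Nonempty := ⟨Fin.last d, by simp [hS]; linarith⟩
  set i := S.min' hSne with hidef
  have hi : a ≤ x i := by
    have := S.min'_mem hSne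
    simpa [hS] using this
  have himin : ∀ i', i' < i → x i' < a := by
    intro i' h
    by_contra h'
    push_neg at h'
    have : i' ∈ S := by simp [hS, h']
    exact absurd (S.min'_le _ this) (not_le.mpr h)
  set T : Finset (Fin (d+1)) := Finset.univ.filter (fun i => x i ≤ b) with hT
  have hTne : T.Nonempty := ⟨0, by simp [hT]; linarith⟩
  set j := T.max' hTne with hjdef
  have hj : x j ≤ b := by
    have := T.max'_mem hTne
    simpa [hT] using this
  have hjmax : ∀ j', j < j' → b < x j' := by
    intro j' h
    by_contra h'
    push_neg at h'
    have : j' ∈ T := by simp [hT, h']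
    exact absurd (T.le_max' _ this) (not_le.mpr h)
  clear_value i j
  clear hidef hjdef
  by_cases hij : x i < x j
  · left
    refine ⟨i, j, hi, hij, hj, ?_, ?_⟩
    · by_cases hi0 : i = 0
      · refine ⟨⟨0, hd⟩, fun t ht => ?_⟩
        have hxc : (Fin.castSucc ⟨0, hd⟩ : Fin (d+1)) = 0 := rfl
        have ha0 : a = x 0 := le_antisymm (hi0 ▸ hi) ha
        constructor
        · rw [hxc]; linarith [ht.1]
        · calc t ≤ x i := ht.2
            _ ≤ x (Fin.succ ⟨0, hd⟩) := hx.monotone (by rw [hi0]; exact Fin.zero_le _)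
      · obtain ⟨c, rfl⟩ := Fin.eq_succ_of_ne_zero hi0
        have hca : x c.castSucc < a := himin _ (Fin.castSucc_lt_succ : c.castSucc < c.succ)
        exact ⟨c, fun t ht => ⟨le_trans hca.le ht.1, ht.2⟩⟩
    · by_cases hjl : j = Fin.last d
      · have hbl : b = x j := le_antisymm (hjl ▸ hb) hj
        refine ⟨⟨d - 1, by omega⟩, fun t ht => ?_⟩
        have hsucc : (Fin.succ ⟨d - 1, by omega⟩ : Fin (d+1)) = Fin.last d := by
          apply Fin.ext; simp [Fin.last]; omega
        constructor
        · calc x (Fin.castSucc ⟨d - 1, by omega⟩) ≤ x j := hx.monotone (hjl ▸ Fin.le_last _)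
            _ ≤ t := ht.1
        · rw [hsucc, ← hjl, ← hbl]; exact ht.2
      · obtain ⟨c, hc⟩ := Fin.exists_castSucc_eq.mpr hjl
        have hbc : b < x c.succ := hjmax _ (hc ▸ (Fin.castSucc_lt_succ : c.castSucc < c.succ))
        exact ⟨c, fun t ht => ⟨hc ▸ ht.1, le_trans ht.2 hbc.le⟩⟩
  · right
    push_neg at hij
    have hji : j ≤ i := by
      by_contra h
      push_neg at h
      exact absurd (hx h) (not_lt.mpr hij)
    by_cases hi0 : i = 0
    · have hj0 : j = 0 := le_antisymm (hi0 ▸ hji) (Fin.zero_le _)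
      have ha0 : a = x 0 := le_antisymm (hi0 ▸ hi) ha
      refine ⟨⟨0, hd⟩, ⟨0, hd⟩, fun t ht => Or.inl ?_⟩
      have hxc : (Fin.castSucc ⟨0, hd⟩ : Fin (d+1)) = 0 := rfl
      have hbs : b < x (Fin.succ ⟨0, hd⟩) := hjmax _ (by rw [hj0]; exact Fin.succ_pos _)
      exact ⟨by rw [hxc]; linarith [ht.1], by linarith [ht.2]⟩
    · obtain ⟨c, rfl⟩ := Fin.eq_succ_of_ne_zero hi0
      have hca : x c.castSucc < a := himin _ (Fin.castSucc_lt_succ : c.castSucc < c.succ)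
      by_cases hxi : x c.succ ≤ b
      · have hjc : j = c.succ := by
          refine le_antisymm hji ?_
          by_contra h
          push_neg at h
          exact absurd (hjmax _ h) (not_lt.mpr hxi)
        by_cases hcl : c.succ = Fin.last d
        · have hbl : b = x c.succ := le_antisymm (hcl ▸ hb) hxi
          refine ⟨c, c, fun t ht => Or.inl ⟨by linarith [ht.1], by rw [← hbl]; exact ht.2⟩⟩
        · obtain ⟨e, he⟩ := Fin.exists_castSucc_eq.mpr hcl
          have hbe : b < x e.succ := hjmax _ (by rw [hjc, ← he]; exact (Fin.castSucc_lt_succ : e.castSucc < e.succ))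
          refine ⟨c, e, fun t ht => ?_⟩
          rcases le_or_gt t (x c.succ) with h | h
          · exact Or.inl ⟨by linarith [ht.1], h⟩
          · exact Or.inr ⟨by rw [he]; linarith, by linarith [ht.2]⟩
      · push_neg at hxi
        exact ⟨c, c, fun t ht => Or.inl ⟨by linarith [ht.1], by linarith [ht.2]⟩⟩

lemma guillotine_map' (s : ℝ) (g : Rect → Rect) (hg : ∀ Q, (g Q).set ⊆ Q.set)
    {a0 a1 b0 b1 : ℝ} {P : List Rect} (h : Guillotine s a0 a1 b0 b1 P) :
    Guillotine s a0 a1 b0 b1 (P.map g) := by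
  induction h with
  | single a0 a1 b0 b1 P h => exact Guillotine.single _ _ _ _ _ ((hg P).trans h)
  | vert a0 a1 b0 b1 a h1 h2 P1 P2 g1 g2 ih1 ih2 =>
      rw [List.map_append]; exact Guillotine.vert _ _ _ _ a h1 h2 _ _ ih1 ih2
  | horiz a0 a1 b0 b1 b h1 h2 P1 P2 g1 g2 ih1 ih2 =>
      rw [List.map_append]; exact Guillotine.horiz _ _ _ _ b h1 h2 _ _ ih1 ih2

lemma guillotine_subset' (s : ℝ) (hs : 0 ≤ s) {a0 a1 b0 b1 : ℝ} {P : List Rect}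
    (h : Guillotine s a0 a1 b0 b1 P) :
    ∀ Q ∈ P, Q.set ⊆ Set.Icc a0 a1 ×ˢ Set.Icc b0 b1 := by
  induction h with
  | single a0 a1 b0 b1 P h =>
      intro Q hQ
      rw [List.mem_singleton] at hQ
      subst hQ
      exact h
  | vert a0 a1 b0 b1 a h1 h2 P1 P2 g1 g2 ih1 ih2 =>
      intro Q hQ
      rcases List.mem_append.mp hQ with h' | h'
      · exact (ih1 Q h').trans
          (Set.prod_mono (Set.Icc_subset_Icc le_rfl (by linarith)) subset_rfl)
      · exact (ih2 Q h').trans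
          (Set.prod_mono (Set.Icc_subset_Icc (by linarith) le_rfl) subset_rfl)
  | horiz a0 a1 b0 b1 b h1 h2 P1 P2 g1 g2 ih1 ih2 =>
      intro Q hQ
      rcases List.mem_append.mp hQ with h' | h'
      · exact (ih1 Q h').trans
          (Set.prod_mono subset_rfl (Set.Icc_subset_Icc le_rfl (by linarith)))
      · exact (ih2 Q h').trans
          (Set.prod_mono subset_rfl (Set.Icc_subset_Icc (by linarith) le_rfl))

lemma roundRect' (δ V : ℝ) (hδ : 0 ≤ δ) (hV : 4 * δ < V)
    (a0 a1 b0 b1 : ℝ)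
    (f : Pt → ℝ) (hint : Integrable f) (hpos : ∀ p, 0 ≤ f p)
    (d : ℕ) (x y : Fin (d + 1) → ℝ) (hx : StrictMono x) (hy : StrictMono y)
    (hx0 : x 0 = a0) (hxd : x (Fin.last d) = a1)
    (hy0 : y 0 = b0) (hyd : y (Fin.last d) = b1)
    (hxs : ∀ i : Fin d,
      val f (Set.Icc (x i.castSucc) (x i.succ) ×ˢ Set.Icc b0 b1) ≤ δ)
    (hys : ∀ j : Fin d,
      val f (Set.Icc a0 a1 ×ˢ Set.Icc (y j.castSucc) (y j.succ)) ≤ δ)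
    (Q : Rect) (hQL : Q.set ⊆ Set.Icc a0 a1 ×ˢ Set.Icc b0 b1)
    (hQv : V ≤ val f Q.set) :
    ∃ R : Rect, R.set ⊆ Q.set ∧ (∃ i, R.a = x i) ∧ (∃ i, R.b = x i) ∧
      (∃ j, R.c = y j) ∧ (∃ j, R.d = y j) ∧ V - 4 * δ ≤ val f R.set := by
  have hm : ∀ u v u' v' : ℝ, MeasurableSet (Set.Icc u v ×ˢ Set.Icc u' v' : Set Pt) :=
    fun _ _ _ _ => measurableSet_Icc.prod measurableSet_Icc
  have hcorner1 : ((Q.a, Q.c) : Pt) ∈ Q.set := ⟨⟨le_rfl, Q.hab.le⟩, ⟨le_rfl, Q.hcd.le⟩⟩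
  have hcorner2 : ((Q.b, Q.d) : Pt) ∈ Q.set := ⟨⟨Q.hab.le, le_rfl⟩, ⟨Q.hcd.le, le_rfl⟩⟩
  have h1 := hQL hcorner1
  have h2 := hQL hcorner2
  have haQ : a0 ≤ Q.a := h1.1.1
  have hbQ : Q.b ≤ a1 := h2.1.2
  have hcQ : b0 ≤ Q.c := h1.2.1
  have hdQ : Q.d ≤ b1 := h2.2.2
  have hx1 := oneDim d x hx Q.a Q.b (hx0 ▸ haQ) Q.hab (hxd ▸ hbQ)
  have hy1 := oneDim d y hy Q.c Q.d (hy0 ▸ hcQ) Q.hcd (hyd ▸ hdQ)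
  rcases hx1 with ⟨i, j, hia, hij, hjb, ⟨cL, hcL⟩, ⟨cR, hcR⟩⟩ | ⟨c1, c2, hc⟩
  · rcases hy1 with ⟨i', j', hic, hij', hjd, ⟨cB, hcB⟩, ⟨cT, hcT⟩⟩ | ⟨c1, c2, hc⟩
    · -- main case: build the rounded rectangle
      refine ⟨⟨x i, x j, y i', y j', hij, hij'⟩, ?_, ⟨i, rfl⟩, ⟨j, rfl⟩, ⟨i', rfl⟩, ⟨j', rfl⟩, ?_⟩
      · exact Set.prod_mono (Set.Icc_subset_Icc hia hjb) (Set.Icc_subset_Icc hic hjd)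
      · set R : Rect := ⟨x i, x j, y i', y j', hij, hij'⟩ with hR
        have hRset : R.set = Set.Icc (x i) (x j) ×ˢ Set.Icc (y i') (y j') := rfl
        set SL := Set.Icc (x cL.castSucc) (x cL.succ) ×ˢ Set.Icc b0 b1 with hSL
        set SR := Set.Icc (x cR.castSucc) (x cR.succ) ×ˢ Set.Icc b0 b1 with hSR
        set SB := Set.Icc a0 a1 ×ˢ Set.Icc (y cB.castSucc) (y cB.succ) with hSB
        set ST := Set.Icc a0 a1 ×ˢ Set.Icc (y cT.castSucc) (y cT.succ) with hST
        have cover : Q.set ⊆ R.set ∪ SL ∪ SR ∪ SB ∪ ST := by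
          rintro ⟨p, q⟩ hpq
          have hL := hQL hpq
          rcases lt_or_ge p (x i) with hp1 | hp1
          · exact Or.inl (Or.inl (Or.inl (Or.inr ⟨hcL ⟨hpq.1.1, hp1.le⟩, hL.2⟩)))
          rcases lt_or_ge (x j) p with hp2 | hp2
          · exact Or.inl (Or.inl (Or.inr ⟨hcR ⟨hp2.le, hpq.1.2⟩, hL.2⟩))
          rcases lt_or_ge q (y i') with hq1 | hq1
          · exact Or.inl (Or.inr ⟨hL.1, hcB ⟨hpq.2.1, hq1.le⟩⟩)
          rcases lt_or_ge (y j') q with hq2 | hq2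
          · exact Or.inr ⟨hL.1, hcT ⟨hq2.le, hpq.2.2⟩⟩
          exact Or.inl (Or.inl (Or.inl (Or.inl ⟨⟨hp1, hp2⟩, ⟨hq1, hq2⟩⟩)))
        have mR : MeasurableSet R.set := hm _ _ _ _
        have mSL : MeasurableSet SL := hm _ _ _ _
        have mSR : MeasurableSet SR := hm _ _ _ _
        have mSB : MeasurableSet SB := hm _ _ _ _
        have mST : MeasurableSet ST := hm _ _ _ _
        have s1 : val f Q.set ≤ val f (R.set ∪ SL ∪ SR ∪ SB ∪ ST) :=
          val_mono' f hint hpos cover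
        have s2 : val f (R.set ∪ SL ∪ SR ∪ SB ∪ ST) ≤
            val f (R.set ∪ SL ∪ SR ∪ SB) + val f ST :=
          val_union_le' f hint hpos (((mR.union mSL).union mSR).union mSB) mST
        have s3 : val f (R.set ∪ SL ∪ SR ∪ SB) ≤ val f (R.set ∪ SL ∪ SR) + val f SB :=
          val_union_le' f hint hpos ((mR.union mSL).union mSR) mSB
        have s4 : val f (R.set ∪ SL ∪ SR) ≤ val f (R.set ∪ SL) + val f SR :=
          val_union_le' f hint hpos (mR.union mSL) mSR
        have s5 : val f (R.set ∪ SL) ≤ val f R.set + val f SL :=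
          val_union_le' f hint hpos mR mSL
        have bL : val f SL ≤ δ := hxs cL
        have bR : val f SR ≤ δ := hxs cR
        have bB : val f SB ≤ δ := hys cB
        have bT : val f ST ≤ δ := hys cT
        linarith
    · -- degenerate in y: Q fits in two horizontal strips
      exfalso
      have cover : Q.set ⊆ (Set.Icc a0 a1 ×ˢ Set.Icc (y c1.castSucc) (y c1.succ)) ∪
          (Set.Icc a0 a1 ×ˢ Set.Icc (y c2.castSucc) (y c2.succ)) := by
        rintro ⟨p, q⟩ hpq
        have hL := hQL hpq
        rcases hc hpq.2 with h | h
        · exact Or.inl ⟨hL.1, h⟩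
        · exact Or.inr ⟨hL.1, h⟩
      have := (val_mono' f hint hpos cover).trans
        ((val_union_le' f hint hpos (hm _ _ _ _) (hm _ _ _ _)).trans
          (add_le_add (hys c1) (hys c2)))
      linarith
  · -- degenerate in x: Q fits in two vertical strips
    exfalso
    have cover : Q.set ⊆ (Set.Icc (x c1.castSucc) (x c1.succ) ×ˢ Set.Icc b0 b1) ∪
        (Set.Icc (x c2.castSucc) (x c2.succ) ×ˢ Set.Icc b0 b1) := by
      rintro ⟨p, q⟩ hpq
      have hL := hQL hpq
      rcases hc hpq.1 with h | h
      · exact Or.inl ⟨h, hL.2⟩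
      · exact Or.inr ⟨h, hL.2⟩
    have := (val_mono' f hint hpos cover).trans
      ((val_union_le' f hint hpos (hm _ _ _ _) (hm _ _ _ _)).trans
        (add_le_add (hxs c1) (hxs c2)))
    linarith


/-- Rounding an `s`-separated guillotine partition to a grid whose strips all
have value at most `δ` loses at most `4δ` of the value of each piece. -/
theorem stmt16 (s : ℝ) (hs : 0 ≤ s) (δ : ℝ) (hδ : 0 ≤ δ) (V : ℝ) (hV : 4 * δ < V)
    (a0 a1 b0 b1 : ℝ) (ha : a0 < a1) (hb : b0 < b1)
    (f : Pt → ℝ) (hint : Integrable f) (hpos : ∀ p, 0 ≤ f p)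
    (d : ℕ) (x y : Fin (d + 1) → ℝ)
    (hx : StrictMono x) (hy : StrictMono y)
    (hx0 : x 0 = a0) (hxd : x (Fin.last d) = a1)
    (hy0 : y 0 = b0) (hyd : y (Fin.last d) = b1)
    (hxs : ∀ i : Fin d,
      val f (Set.Icc (x i.castSucc) (x i.succ) ×ˢ Set.Icc b0 b1) ≤ δ)
    (hys : ∀ j : Fin d,
      val f (Set.Icc a0 a1 ×ˢ Set.Icc (y j.castSucc) (y j.succ)) ≤ δ)
    (k : ℕ)
    (hex : ∃ P : List Rect, P.length = k ∧ Guillotine s a0 a1 b0 b1 P ∧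
      ∀ Q ∈ P, V ≤ val f Q.set) :
    ∃ P' : List Rect, P'.length = k ∧ Guillotine s a0 a1 b0 b1 P' ∧
      ∀ Q ∈ P', (∃ i, Q.a = x i) ∧ (∃ i, Q.b = x i) ∧
        (∃ j, Q.c = y j) ∧ (∃ j, Q.d = y j) ∧ V - 4 * δ ≤ val f Q.set := by
  classical
  obtain ⟨P, hlen, hG, hval⟩ := hex
  have hsub := guillotine_subset' s hs hG
  have hround : ∀ Q : Rect, Q.set ⊆ Set.Icc a0 a1 ×ˢ Set.Icc b0 b1 → V ≤ val f Q.set →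
      ∃ R : Rect, R.set ⊆ Q.set ∧ (∃ i, R.a = x i) ∧ (∃ i, R.b = x i) ∧
        (∃ j, R.c = y j) ∧ (∃ j, R.d = y j) ∧ V - 4 * δ ≤ val f R.set :=
    fun Q h1 h2 => roundRect' δ V hδ hV a0 a1 b0 b1 f hint hpos d x y hx hy
      hx0 hxd hy0 hyd hxs hys Q h1 h2
  let g : Rect → Rect := fun Q =>
    if h : Q.set ⊆ Set.Icc a0 a1 ×ˢ Set.Icc b0 b1 ∧ V ≤ val f Q.set
    then (hround Q h.1 h.2).choose else Q
  have hg : ∀ Q, (g Q).set ⊆ Q.set := by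
    intro Q
    simp only [g]
    split_ifs with h
    · exact (hround Q h.1 h.2).choose_spec.1
    · exact subset_rfl
  refine ⟨P.map g, by simpa using hlen, guillotine_map' s g hg hG, ?_⟩
  intro Q' hQ'
  obtain ⟨Q, hQ, rfl⟩ := List.mem_map.mp hQ'
  have hh : Q.set ⊆ Set.Icc a0 a1 ×ˢ Set.Icc b0 b1 ∧ V ≤ val f Q.set :=
    ⟨hsub Q hQ, hval Q hQ⟩
  have hgQ : g Q = (hround Q hh.1 hh.2).choose := dif_pos hh
  obtain ⟨-, h1, h2, h3, h4, h5⟩ := (hround Q hh.1 hh.2).choose_spec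
  rw [hgQ]
  exact ⟨h1, h2, h3, h4, h5⟩
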